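/- Let q be a power of an odd prime and let P, Q ∈ F_q[x] be non-constant polynomials of degree at most 2 such that for every k ∈ F_q the polynomial P − kQ is not constant. Then the set (P,Q) = {(P(x), Q(x)) : x ∈ F_q} is a maximum Sidon set over F_q × F_q (i.e., a Sidon set with exactly q elements). In particular, {(x, x²) : x ∈ F_q} is a maximum Sidon set. -/
import Mathlib


open Polynomial

/-- A subset `A` of an abelian group is a Sidon set if whenever
`a₁ - a₂ = a₃ - a₄` with all four elements in `A`, then `{a₁, a₄} = {a₂, a₃}`. -/
def IsSidon {G : Type*} [AddCommGroup G] (A : Set G) : Prop :=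
  ∀ a₁ ∈ A, ∀ a₂ ∈ A, ∀ a₃ ∈ A, ∀ a₄ ∈ A,
    a₁ - a₂ = a₃ - a₄ → ({a₁, a₄} : Set G) = {a₂, a₃}

/-- The set `(P,Q) = {(P(x), Q(x)) : x ∈ F}`. -/
def polyGraph {F : Type*} [Field F] (P Q : F[X]) : Set (F × F) :=
  Set.range fun x : F => (P.eval x, Q.eval x)

/-- A maximum Sidon set over `F × F`: a Sidon set with exactly `|F|` elements. -/
def IsMaxSidon {F : Type*} [Field F] [Fintype F] (A : Set (F × F)) : Prop :=
  IsSidon A ∧ A.ncard = Fintype.card F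

/-- A polynomial `P` is Sidon if there is `Q` with `(P,Q)` a maximum Sidon set. -/
def IsSidonPoly {F : Type*} [Field F] [Fintype F] (P : F[X]) : Prop :=
  ∃ Q : F[X], IsMaxSidon (polyGraph P Q)

/-- A permutation polynomial: its evaluation map is a bijection of `F`. -/
def IsPermPoly {F : Type*} [Field F] (R : F[X]) : Prop :=
  Function.Bijective fun x : F => R.eval x

/-- Sidon equivalence: `P' = R ∘ P ∘ T` (as functions on `F`)
for permutation polynomials `R`, `T`. -/
def SidonEquiv {F : Type*} [Field F] (P P' : F[X]) : Prop :=
  ∃ R T : F[X], IsPermPoly R ∧ IsPermPoly T ∧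
    ∀ x : F, P'.eval x = R.eval (P.eval (T.eval x))

section Aux

variable {F : Type*} [Field F]

lemma eval_deg2 (P : F[X]) (hPdeg : P.natDegree ≤ 2) (x : F) :
    P.eval x = P.coeff 0 + P.coeff 1 * x + P.coeff 2 * x ^ 2 := by
  rw [Polynomial.eval_eq_sum_range' (show P.natDegree < 3 by omega) x]
  simp [Finset.sum_range_succ]

lemma natDeg_zero_aux (R : F[X]) (hdeg : R.natDegree ≤ 2) (h1 : R.coeff 1 = 0)
    (h2 : R.coeff 2 = 0) : R.natDegree = 0 := by
  have : R.natDegree ≤ 0 := by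
    rw [Polynomial.natDegree_le_iff_coeff_eq_zero]
    intro m hm
    match m, hm with
    | 1, _ => exact h1
    | 2, _ => exact h2
    | (n+3), _ => exact Polynomial.coeff_eq_zero_of_natDegree_lt (by omega)
  omega

lemma maxSidon_main [Fintype F] (hchar : ringChar F ≠ 2)
    (P Q : F[X]) (hP : 0 < P.natDegree) (hQ : 0 < Q.natDegree)
    (hPdeg : P.natDegree ≤ 2) (hQdeg : Q.natDegree ≤ 2)
    (h : ∀ k : F, 0 < (P - C k * Q).natDegree) :
    IsMaxSidon (polyGraph P Q) := by
  have htwo : (2 : F) ≠ 0 := Ring.two_ne_zero hchar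
  set a1 := P.coeff 2 with ha1
  set b1 := P.coeff 1 with hb1
  set a2 := Q.coeff 2 with ha2
  set b2 := Q.coeff 1 with hb2
  -- The determinant is nonzero
  have hQne : a2 ≠ 0 ∨ b2 ≠ 0 := by
    by_contra hc
    push_neg at hc
    have := natDeg_zero_aux Q hQdeg hc.2 hc.1
    omega
  have hnotprop : ∀ k : F, ¬(a1 = k * a2 ∧ b1 = k * b2) := by
    rintro k ⟨hk2, hk1⟩
    have hd : (P - C k * Q).natDegree ≤ 2 := by
      refine (Polynomial.natDegree_sub_le _ _).trans ?_
      simp only [max_le_iff]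
      exact ⟨hPdeg, (Polynomial.natDegree_C_mul_le _ _).trans hQdeg⟩
    have hc1 : (P - C k * Q).coeff 1 = 0 := by
      simp [Polynomial.coeff_sub, Polynomial.coeff_C_mul, ← hb1, ← hb2, hk1]
    have hc2 : (P - C k * Q).coeff 2 = 0 := by
      simp [Polynomial.coeff_sub, Polynomial.coeff_C_mul, ← ha1, ← ha2, hk2]
    have := natDeg_zero_aux _ hd hc1 hc2
    have := h k
    omega
  have hdet : a1 * b2 - a2 * b1 ≠ 0 := by
    intro hd
    rcases hQne with h2 | h2
    · exact hnotprop (a1 / a2) ⟨by field_simp, by field_simp; linear_combination -hd⟩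
    · exact hnotprop (b1 / b2) ⟨by field_simp; linear_combination hd, by field_simp⟩
  -- Injectivity of the evaluation map
  have hinj : Function.Injective (fun x : F => (P.eval x, Q.eval x)) := by
    intro x y hxy
    simp only [Prod.mk.injEq] at hxy
    by_contra hne
    obtain ⟨hxy1, hxy2⟩ := hxy
    rw [eval_deg2 P hPdeg x, eval_deg2 P hPdeg y] at hxy1
    rw [eval_deg2 Q hQdeg x, eval_deg2 Q hQdeg y] at hxy2
    simp only [← ha1, ← hb1] at hxy1
    simp only [← ha2, ← hb2] at hxy2
    have hsub : x - y ≠ 0 := sub_ne_zero.mpr hne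
    have e1 : (x - y) * (a1 * (x + y) + b1) = 0 := by linear_combination hxy1
    have e2 : (x - y) * (a2 * (x + y) + b2) = 0 := by linear_combination hxy2
    have e1' : a1 * (x + y) + b1 = 0 := (mul_eq_zero.mp e1).resolve_left hsub
    have e2' : a2 * (x + y) + b2 = 0 := (mul_eq_zero.mp e2).resolve_left hsub
    exact hdet (by linear_combination a1 * e2' - a2 * e1')
  constructor
  · -- Sidon property
    intro p1 hp1 p2 hp2 p3 hp3 p4 hp4 heq
    obtain ⟨x, rfl⟩ := hp1
    obtain ⟨y, rfl⟩ := hp2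
    obtain ⟨z, rfl⟩ := hp3
    obtain ⟨w, rfl⟩ := hp4
    simp only [Prod.mk_sub_mk, Prod.mk.injEq] at heq
    obtain ⟨h1, h2⟩ := heq
    rw [eval_deg2 P hPdeg x, eval_deg2 P hPdeg y, eval_deg2 P hPdeg z,
      eval_deg2 P hPdeg w] at h1
    rw [eval_deg2 Q hQdeg x, eval_deg2 Q hQdeg y, eval_deg2 Q hQdeg z,
      eval_deg2 Q hQdeg w] at h2
    simp only [← ha1, ← hb1] at h1
    simp only [← ha2, ← hb2] at h2
    have hu : x + w - (y + z) = 0 := by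
      have hd : (a1 * b2 - a2 * b1) * (x + w - (y + z)) = 0 := by
        linear_combination a1 * h2 - a2 * h1
      exact (mul_eq_zero.mp hd).resolve_left hdet
    have hv : (x ^ 2 + w ^ 2) - (y ^ 2 + z ^ 2) = 0 := by
      have hd : (a1 * b2 - a2 * b1) * ((x ^ 2 + w ^ 2) - (y ^ 2 + z ^ 2)) = 0 := by
        linear_combination b2 * h1 - b1 * h2
      exact (mul_eq_zero.mp hd).resolve_left hdet
    have hprod : x * w - y * z = 0 := by
      have h2' : (2 : F) * (x * w - y * z) = 0 := by
        linear_combination (x + w + y + z) * hu - hv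
      exact (mul_eq_zero.mp h2').resolve_left htwo
    by_cases hxy : x = y
    · have hwz : w = z := by linear_combination hu - hxy
      rw [hxy, hwz]
    · have hxz : x = z := by
        have hq : (x - y) * (x - z) = 0 := by linear_combination x * hu - hprod
        exact sub_eq_zero.mp ((mul_eq_zero.mp hq).resolve_left (sub_ne_zero.mpr hxy))
      have hwy : w = y := by linear_combination hu - hxz
      rw [hxz, hwy]
      exact Set.pair_comm _ _
  · -- Cardinality
    rw [polyGraph, ← Set.image_univ, Set.ncard_image_of_injective _ hinj,
      Set.ncard_univ, Nat.card_eq_fintype_card]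

end Aux

/-- Cilleruelo's construction of maximum Sidon sets from pairs of
polynomials of degree at most 2; in particular `(x, x²)` is a maximum Sidon set. -/
theorem stmt_0 {F : Type*} [Field F] [Fintype F] (hchar : ringChar F ≠ 2)
    (P Q : F[X]) (hP : 0 < P.natDegree) (hQ : 0 < Q.natDegree)
    (hPdeg : P.natDegree ≤ 2) (hQdeg : Q.natDegree ≤ 2)
    (h : ∀ k : F, 0 < (P - C k * Q).natDegree) :
    IsMaxSidon (polyGraph P Q) ∧ IsMaxSidon (polyGraph (X : F[X]) (X ^ 2)) := by
  refine ⟨maxSidon_main hchar P Q hP hQ hPdeg hQdeg h, maxSidon_main hchar X (X ^ 2) ?_ ?_ ?_ ?_ ?_⟩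
  · simp
  · simp [Polynomial.natDegree_pow]
  · simp
  · simp [Polynomial.natDegree_pow]
  · intro k
    have hc : ((X : F[X]) - C k * X ^ 2).coeff 1 ≠ 0 := by
      simp [Polynomial.coeff_sub, Polynomial.coeff_C_mul]
    have := Polynomial.le_natDegree_of_ne_zero hc
    omega
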